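/- arXiv:2002.00816 — 4 statements merged into one kernel-verified Lean document; each statement's English description precedes it below -/
import Mathlib

section
/- Let Z_0,...,Z_J be nonnegative reals bounded by C_Z, and let h_{1,0},...,h_{1,J} and h_{2,0},...,h_{2,J} take values in [0,1]. Define T = Σ_{j=0}^J Z_j h_{1,j} ∏_{l=0}^{j−1}(1−h_{1,l}) − Σ_{j=0}^J Z_j h_{2,j} ∏_{l=0}^{j−1}(1−h_{2,l}). Then |T| ≤ C_Z Σ_{j=0}^{J−1} |h_{1,j} − h_{2,j}| ∏_{l=0}^{j−1}(1−h_{2,l}), provided h_{1,J} = h_{2,J} = 1. -/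
open Finset

private lemma tele_aux (h : ℕ → ℝ) (n : ℕ) :
    ∑ j ∈ range n, h j * ∏ l ∈ range j, (1 - h l)
      = 1 - ∏ l ∈ range n, (1 - h l) := by
  induction n with
  | zero => simp
  | succ n ih => rw [sum_range_succ, prod_range_succ, ih]; ring

private lemma S_nonneg (J : ℕ) (Z h : ℕ → ℝ)
    (hZ : ∀ j ≤ J, 0 ≤ Z j)
    (hh : ∀ j ≤ J, h j ∈ Set.Icc (0 : ℝ) 1) :
    0 ≤ ∑ j ∈ range (J + 1), Z j * h j * ∏ l ∈ range j, (1 - h l) := by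
  apply Finset.sum_nonneg
  intro j hj
  rw [mem_range] at hj
  have hj' : j ≤ J := Nat.lt_succ_iff.mp hj
  have hp : 0 ≤ ∏ l ∈ range j, (1 - h l) := by
    apply Finset.prod_nonneg
    intro l hl
    rw [mem_range] at hl
    have := hh l (le_trans (Nat.le_of_lt hl) hj')
    linarith [this.2]
  exact mul_nonneg (mul_nonneg (hZ j hj') (hh j hj').1) hp

private lemma S_le (J : ℕ) (CZ : ℝ) (Z h : ℕ → ℝ)
    (hZ : ∀ j ≤ J, 0 ≤ Z j ∧ Z j ≤ CZ)
    (hh : ∀ j ≤ J, h j ∈ Set.Icc (0 : ℝ) 1) :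
    (∑ j ∈ range (J + 1), Z j * h j * ∏ l ∈ range j, (1 - h l)) ≤ CZ := by
  have hCZ : 0 ≤ CZ := le_trans (hZ 0 (Nat.zero_le J)).1 (hZ 0 (Nat.zero_le J)).2
  have hpr : ∀ j ≤ J + 1, 0 ≤ ∏ l ∈ range j, (1 - h l) := by
    intro j hj
    apply Finset.prod_nonneg
    intro l hl
    rw [mem_range] at hl
    have := hh l (by omega)
    linarith [this.2]
  have step : ∀ j ∈ range (J + 1),
      Z j * h j * ∏ l ∈ range j, (1 - h l) ≤ CZ * (h j * ∏ l ∈ range j, (1 - h l)) := by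
    intro j hj
    rw [mem_range] at hj
    have hj' : j ≤ J := Nat.lt_succ_iff.mp hj
    have hZj := hZ j hj'
    have hhj := hh j hj'
    have hp := hpr j (by omega)
    have : 0 ≤ h j * ∏ l ∈ range j, (1 - h l) := mul_nonneg hhj.1 hp
    nlinarith
  calc (∑ j ∈ range (J + 1), Z j * h j * ∏ l ∈ range j, (1 - h l))
      ≤ ∑ j ∈ range (J + 1), CZ * (h j * ∏ l ∈ range j, (1 - h l)) :=
        Finset.sum_le_sum step
    _ = CZ * (1 - ∏ l ∈ range (J + 1), (1 - h l)) := by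
        rw [← Finset.mul_sum, tele_aux]
    _ ≤ CZ := by
        have := hpr (J + 1) le_rfl
        nlinarith

private lemma key : ∀ (J : ℕ) (CZ : ℝ) (Z h₁ h₂ : ℕ → ℝ),
    (∀ j ≤ J, 0 ≤ Z j ∧ Z j ≤ CZ) →
    (∀ j ≤ J, h₁ j ∈ Set.Icc (0 : ℝ) 1) →
    (∀ j ≤ J, h₂ j ∈ Set.Icc (0 : ℝ) 1) →
    h₁ J = 1 → h₂ J = 1 →
    |(∑ j ∈ range (J + 1), Z j * h₁ j * ∏ l ∈ range j, (1 - h₁ l)) -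
        ∑ j ∈ range (J + 1), Z j * h₂ j * ∏ l ∈ range j, (1 - h₂ l)| ≤
      CZ * ∑ j ∈ range J, |h₁ j - h₂ j| * ∏ l ∈ range j, (1 - h₂ l) := by
  intro J
  induction J with
  | zero =>
      intro CZ Z h₁ h₂ hZ hh₁ hh₂ hJ₁ hJ₂
      simp [hJ₁, hJ₂]
  | succ J ih =>
      intro CZ Z h₁ h₂ hZ hh₁ hh₂ hJ₁ hJ₂
      set S1 := ∑ j ∈ range (J + 1), Z (j + 1) * h₁ (j + 1) * ∏ l ∈ range j, (1 - h₁ (l + 1))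
        with hS1
      set S2 := ∑ j ∈ range (J + 1), Z (j + 1) * h₂ (j + 1) * ∏ l ∈ range j, (1 - h₂ (l + 1))
        with hS2
      set R := ∑ j ∈ range J, |h₁ (j + 1) - h₂ (j + 1)| * ∏ l ∈ range j, (1 - h₂ (l + 1))
        with hR
      have hZ' : ∀ j ≤ J, 0 ≤ Z (j + 1) ∧ Z (j + 1) ≤ CZ := fun j hj => hZ (j + 1) (by omega)
      have hh₁' : ∀ j ≤ J, h₁ (j + 1) ∈ Set.Icc (0 : ℝ) 1 := fun j hj => hh₁ (j + 1) (by omega)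
      have hh₂' : ∀ j ≤ J, h₂ (j + 1) ∈ Set.Icc (0 : ℝ) 1 := fun j hj => hh₂ (j + 1) (by omega)
      have e1 : (∑ j ∈ range (J + 2), Z j * h₁ j * ∏ l ∈ range j, (1 - h₁ l))
          = (1 - h₁ 0) * S1 + Z 0 * h₁ 0 := by
        rw [Finset.sum_range_succ', hS1, Finset.mul_sum]
        congr 1
        · exact Finset.sum_congr rfl (fun j _ => by rw [prod_range_succ']; ring)
        · simp
      have e2 : (∑ j ∈ range (J + 2), Z j * h₂ j * ∏ l ∈ range j, (1 - h₂ l))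
          = (1 - h₂ 0) * S2 + Z 0 * h₂ 0 := by
        rw [Finset.sum_range_succ', hS2, Finset.mul_sum]
        congr 1
        · exact Finset.sum_congr rfl (fun j _ => by rw [prod_range_succ']; ring)
        · simp
      have e3 : (∑ j ∈ range (J + 1), |h₁ j - h₂ j| * ∏ l ∈ range j, (1 - h₂ l))
          = (1 - h₂ 0) * R + |h₁ 0 - h₂ 0| := by
        rw [Finset.sum_range_succ', hR, Finset.mul_sum]
        congr 1
        · exact Finset.sum_congr rfl (fun j _ => by rw [prod_range_succ']; ring)
        · simp
      have hZ0 := hZ 0 (Nat.zero_le _)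
      have hCZ : 0 ≤ CZ := le_trans hZ0.1 hZ0.2
      have hS1n : 0 ≤ S1 := S_nonneg J _ _ (fun j hj => (hZ' j hj).1) hh₁'
      have hS1u : S1 ≤ CZ := S_le J CZ _ _ hZ' hh₁'
      have hIH : |S1 - S2| ≤ CZ * R :=
        ih CZ (fun n => Z (n + 1)) (fun n => h₁ (n + 1)) (fun n => h₂ (n + 1))
          hZ' hh₁' hh₂' hJ₁ hJ₂
      have hh₁0 := hh₁ 0 (Nat.zero_le _)
      have hh₂0 := hh₂ 0 (Nat.zero_le _)
      have habs : |Z 0 - S1| ≤ CZ := abs_le.mpr ⟨by linarith, by linarith⟩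
      rw [e1, e2, e3]
      have hid : (1 - h₁ 0) * S1 + Z 0 * h₁ 0 - ((1 - h₂ 0) * S2 + Z 0 * h₂ 0)
          = (h₁ 0 - h₂ 0) * (Z 0 - S1) + (1 - h₂ 0) * (S1 - S2) := by ring
      rw [hid]
      calc |(h₁ 0 - h₂ 0) * (Z 0 - S1) + (1 - h₂ 0) * (S1 - S2)|
          ≤ |(h₁ 0 - h₂ 0) * (Z 0 - S1)| + |(1 - h₂ 0) * (S1 - S2)| := abs_add_le _ _
        _ = |h₁ 0 - h₂ 0| * |Z 0 - S1| + (1 - h₂ 0) * |S1 - S2| := by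
            rw [abs_mul, abs_mul, abs_of_nonneg (by linarith [hh₂0.2] : (0:ℝ) ≤ 1 - h₂ 0)]
        _ ≤ |h₁ 0 - h₂ 0| * CZ + (1 - h₂ 0) * (CZ * R) := by
            exact add_le_add (mul_le_mul_of_nonneg_left habs (abs_nonneg _))
              (mul_le_mul_of_nonneg_left hIH (by linarith [hh₂0.2]))
        _ = CZ * ((1 - h₂ 0) * R + |h₁ 0 - h₂ 0|) := by ring

/-- Bound on the difference of randomized-stopping reward sums (Lemma `Delta-d`, pointwise
version): with `0 ≤ Z j ≤ C_Z`, `h i j ∈ [0,1]`, `h 1 J = h 2 J = 1`, and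
`T = Σ_{j=0}^J Z j · h1 j · ∏_{l<j}(1−h1 l) − Σ_{j=0}^J Z j · h2 j · ∏_{l<j}(1−h2 l)`,
one has `|T| ≤ C_Z Σ_{j=0}^{J−1} |h1 j − h2 j| ∏_{l<j}(1−h2 l)`. -/
theorem stmt_1 (J : ℕ) (CZ : ℝ) (Z h₁ h₂ : ℕ → ℝ)
    (hZ : ∀ j ≤ J, 0 ≤ Z j ∧ Z j ≤ CZ)
    (hh₁ : ∀ j ≤ J, h₁ j ∈ Set.Icc (0 : ℝ) 1)
    (hh₂ : ∀ j ≤ J, h₂ j ∈ Set.Icc (0 : ℝ) 1)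
    (hJ₁ : h₁ J = 1) (hJ₂ : h₂ J = 1) :
    |(∑ j ∈ range (J + 1), Z j * h₁ j * ∏ l ∈ range j, (1 - h₁ l)) -
        ∑ j ∈ range (J + 1), Z j * h₂ j * ∏ l ∈ range j, (1 - h₂ l)| ≤
      CZ * ∑ j ∈ range J, |h₁ j - h₂ j| * ∏ l ∈ range j, (1 - h₂ l) := by
  exact key J CZ Z h₁ h₂ hZ hh₁ hh₂ hJ₁ hJ₂
end

section
/- Let X_0,...,X_J be random variables in ℝ^d on a probability space, Z_j = G_j(X_j) with 0 ≤ G_j ≤ C_Z measurable, and for vector functions h = (h_0,...,h_{J−1}) with values in [0,1] define Δ_X(h_1,h_2) = sqrt(E[| Σ_{j=0}^J Z_j p_j(h_1) − Σ_{j=0}^J Z_j p_j(h_2) |²]) where p_j(h) = h_j(X_j)∏_{l=0}^{j−1}(1−h_l(X_l)) (with h_J ≡ 1), and d_X(h_1,h_2) = sqrt(E[| Σ_{j=0}^{J−1} |h_{1,j}(X_j) − h_{2,j}(X_j)| ∏_{l=0}^{j−1}(1−h_{2,l}(X_l)) |²]). Then Δ_X(h_1,h_2) ≤ C_Z · d_X(h_1,h_2).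 -/
open Finset MeasureTheory


lemma tele_sum (J : ℕ) (a : ℕ → ℝ) (haJ : a J = 1) :
    ∑ j ∈ range (J + 1), a j * ∏ l ∈ range j, (1 - a l) = 1 := by
  have h1 : ∀ j, a j * ∏ l ∈ range j, (1 - a l)
      = (∏ l ∈ range j, (1 - a l)) - ∏ l ∈ range (j + 1), (1 - a l) := by
    intro j; rw [prod_range_succ]; ring
  calc ∑ j ∈ range (J + 1), a j * ∏ l ∈ range j, (1 - a l)
      = ∑ j ∈ range (J + 1), ((∏ l ∈ range j, (1 - a l)) - ∏ l ∈ range (j + 1), (1 - a l)) :=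
        sum_congr rfl (fun j _ => h1 j)
    _ = (∏ l ∈ range 0, (1 - a l)) - ∏ l ∈ range (J + 1), (1 - a l) :=
        Finset.sum_range_sub' _ _
    _ = 1 := by
        rw [prod_range_zero, Finset.prod_eq_zero (self_mem_range_succ J)]
        · ring
        · rw [haJ]; ring

lemma S_bounds (CZ : ℝ) (J : ℕ) (z a : ℕ → ℝ)
    (hz : ∀ j, 0 ≤ z j ∧ z j ≤ CZ) (ha : ∀ j, a j ∈ Set.Icc (0 : ℝ) 1) (haJ : a J = 1) :
    0 ≤ ∑ j ∈ range (J + 1), z j * a j * ∏ l ∈ range j, (1 - a l) ∧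
      ∑ j ∈ range (J + 1), z j * a j * ∏ l ∈ range j, (1 - a l) ≤ CZ := by
  have hterm : ∀ j, 0 ≤ a j * ∏ l ∈ range j, (1 - a l) := by
    intro j
    exact mul_nonneg (ha j).1 (prod_nonneg fun l _ => by linarith [(ha l).2])
  constructor
  · exact sum_nonneg fun j _ => by
      have := hterm j
      have := (hz j).1
      nlinarith [hterm j, (hz j).1]
  · calc ∑ j ∈ range (J + 1), z j * a j * ∏ l ∈ range j, (1 - a l)
        ≤ ∑ j ∈ range (J + 1), CZ * (a j * ∏ l ∈ range j, (1 - a l)) := by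
          refine sum_le_sum fun j _ => ?_
          have := hterm j
          nlinarith [(hz j).2]
      _ = CZ * ∑ j ∈ range (J + 1), a j * ∏ l ∈ range j, (1 - a l) := by
          rw [Finset.mul_sum]
      _ = CZ := by rw [tele_sum J a haJ, mul_one]

lemma key_lemma (CZ : ℝ) : ∀ (J : ℕ) (z a b : ℕ → ℝ),
    (∀ j, 0 ≤ z j ∧ z j ≤ CZ) →
    (∀ j, a j ∈ Set.Icc (0 : ℝ) 1) → (∀ j, b j ∈ Set.Icc (0 : ℝ) 1) →
    a J = 1 → b J = 1 →
    |(∑ j ∈ range (J + 1), z j * a j * ∏ l ∈ range j, (1 - a l)) -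
      ∑ j ∈ range (J + 1), z j * b j * ∏ l ∈ range j, (1 - b l)| ≤
      CZ * ∑ j ∈ range J, |a j - b j| * ∏ l ∈ range j, (1 - b l) := by
  intro J
  induction J with
  | zero =>
    intro z a b hz ha hb haJ hbJ
    simp [haJ, hbJ]
  | succ J ih =>
    intro z a b hz ha hb haJ hbJ
    have hCZ : 0 ≤ CZ := le_trans (hz 0).1 (hz 0).2
    have shiftS : ∀ (c : ℕ → ℝ),
        ∑ j ∈ range (J + 1 + 1), z j * c j * ∏ l ∈ range j, (1 - c l)
        = z 0 * c 0 + (1 - c 0) *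
            ∑ j ∈ range (J + 1), z (j + 1) * c (j + 1) * ∏ l ∈ range j, (1 - c (l + 1)) := by
      intro c
      rw [Finset.sum_range_succ']
      simp only [prod_range_zero, mul_one, Finset.mul_sum]
      rw [add_comm]
      congr 1
      refine sum_congr rfl fun j _ => ?_
      rw [Finset.prod_range_succ']
      ring
    have shiftD :
        ∑ j ∈ range (J + 1), |a j - b j| * ∏ l ∈ range j, (1 - b l)
        = |a 0 - b 0| + (1 - b 0) *
            ∑ j ∈ range J, |a (j + 1) - b (j + 1)| * ∏ l ∈ range j, (1 - b (l + 1)) := by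
      rw [Finset.sum_range_succ']
      simp only [prod_range_zero, mul_one, Finset.mul_sum]
      rw [add_comm]
      congr 1
      refine sum_congr rfl fun j _ => ?_
      rw [Finset.prod_range_succ']
      ring
    set Ta := ∑ j ∈ range (J + 1), z (j + 1) * a (j + 1) * ∏ l ∈ range j, (1 - a (l + 1)) with hTa
    set Tb := ∑ j ∈ range (J + 1), z (j + 1) * b (j + 1) * ∏ l ∈ range j, (1 - b (l + 1)) with hTb
    set D := ∑ j ∈ range J, |a (j + 1) - b (j + 1)| * ∏ l ∈ range j, (1 - b (l + 1)) with hD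
    have hTab : |Ta - Tb| ≤ CZ * D :=
      ih (fun j => z (j + 1)) (fun j => a (j + 1)) (fun j => b (j + 1))
        (fun j => hz (j + 1)) (fun j => ha (j + 1)) (fun j => hb (j + 1)) haJ hbJ
    have hTaB := S_bounds CZ J (fun j => z (j + 1)) (fun j => a (j + 1))
        (fun j => hz (j + 1)) (fun j => ha (j + 1)) haJ
    have hTaB' : 0 ≤ Ta ∧ Ta ≤ CZ := by simpa using hTaB
    rw [shiftS a, shiftS b, shiftD]
    have step1 : z 0 * a 0 + (1 - a 0) * Ta - (z 0 * b 0 + (1 - b 0) * Tb)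
        = (a 0 - b 0) * (z 0 - Ta) + (1 - b 0) * (Ta - Tb) := by ring
    rw [step1]
    have h1 : |(a 0 - b 0) * (z 0 - Ta)| ≤ |a 0 - b 0| * CZ := by
      rw [abs_mul]
      refine mul_le_mul_of_nonneg_left ?_ (abs_nonneg _)
      rw [abs_le]
      constructor <;> [linarith [(hz 0).1, (hz 0).2, hTaB'.1, hTaB'.2]; linarith [(hz 0).1, (hz 0).2, hTaB'.1, hTaB'.2]]
    have h2 : |(1 - b 0) * (Ta - Tb)| ≤ (1 - b 0) * (CZ * D) := by
      rw [abs_mul, abs_of_nonneg (by linarith [(hb 0).2] : (0:ℝ) ≤ 1 - b 0)]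
      exact mul_le_mul_of_nonneg_left hTab (by linarith [(hb 0).2])
    calc |(a 0 - b 0) * (z 0 - Ta) + (1 - b 0) * (Ta - Tb)|
        ≤ |(a 0 - b 0) * (z 0 - Ta)| + |(1 - b 0) * (Ta - Tb)| := abs_add_le _ _
      _ ≤ |a 0 - b 0| * CZ + (1 - b 0) * (CZ * D) := add_le_add h1 h2
      _ = CZ * (|a 0 - b 0| + (1 - b 0) * D) := by ring

/-- Lemma `Delta-d`: with `Z_j = G_j(X_j)`, `0 ≤ G_j ≤ C_Z`,
`p_j(h) = h_j(X_j) ∏_{l<j} (1 − h_l(X_l))` (with `h_J ≡ 1`),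
`Δ_X(h₁,h₂) = sqrt(E[|Σ_j Z_j p_j(h₁) − Σ_j Z_j p_j(h₂)|²])` and
`d_X(h₁,h₂) = sqrt(E[|Σ_{j<J} |h₁,j(X_j) − h₂,j(X_j)| ∏_{l<j}(1−h₂,l(X_l))|²])`,
one has `Δ_X(h₁,h₂) ≤ C_Z · d_X(h₁,h₂)`. -/
theorem stmt_2 {Ω : Type*} [MeasurableSpace Ω] (μ : Measure Ω) [IsProbabilityMeasure μ]
    (d J : ℕ) (X : ℕ → Ω → (Fin d → ℝ)) (hX : ∀ j, Measurable (X j))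
    (CZ : ℝ) (G : ℕ → (Fin d → ℝ) → ℝ)
    (hGmeas : ∀ j, Measurable (G j)) (hG : ∀ j x, 0 ≤ G j x ∧ G j x ≤ CZ)
    (h₁ h₂ : ℕ → (Fin d → ℝ) → ℝ)
    (hmeas₁ : ∀ j, Measurable (h₁ j)) (hmeas₂ : ∀ j, Measurable (h₂ j))
    (hval₁ : ∀ j x, h₁ j x ∈ Set.Icc (0 : ℝ) 1)
    (hval₂ : ∀ j x, h₂ j x ∈ Set.Icc (0 : ℝ) 1)
    (hJ₁ : ∀ x, h₁ J x = 1) (hJ₂ : ∀ x, h₂ J x = 1) :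
    Real.sqrt (∫ ω,
        |(∑ j ∈ range (J + 1),
              G j (X j ω) * h₁ j (X j ω) * ∏ l ∈ range j, (1 - h₁ l (X l ω))) -
            ∑ j ∈ range (J + 1),
              G j (X j ω) * h₂ j (X j ω) * ∏ l ∈ range j, (1 - h₂ l (X l ω))| ^ 2 ∂μ) ≤
      CZ * Real.sqrt (∫ ω,
        |∑ j ∈ range J,
            |h₁ j (X j ω) - h₂ j (X j ω)| * ∏ l ∈ range j, (1 - h₂ l (X l ω))| ^ 2 ∂μ) := by
  have hCZ : 0 ≤ CZ := le_trans (hG 0 (fun _ => 0)).1 (hG 0 (fun _ => 0)).2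
  set A : Ω → ℝ := fun ω => ∑ j ∈ range (J + 1),
      G j (X j ω) * h₁ j (X j ω) * ∏ l ∈ range j, (1 - h₁ l (X l ω)) with hA
  set B : Ω → ℝ := fun ω => ∑ j ∈ range (J + 1),
      G j (X j ω) * h₂ j (X j ω) * ∏ l ∈ range j, (1 - h₂ l (X l ω)) with hB
  set D : Ω → ℝ := fun ω => ∑ j ∈ range J,
      |h₁ j (X j ω) - h₂ j (X j ω)| * ∏ l ∈ range j, (1 - h₂ l (X l ω)) with hD
  have hpt : ∀ ω, |A ω - B ω| ≤ CZ * D ω := fun ω =>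
    key_lemma CZ J (fun j => G j (X j ω)) (fun j => h₁ j (X j ω)) (fun j => h₂ j (X j ω))
      (fun j => hG j (X j ω)) (fun j => hval₁ j (X j ω)) (fun j => hval₂ j (X j ω))
      (hJ₁ (X J ω)) (hJ₂ (X J ω))
  have hDnn : ∀ ω, 0 ≤ D ω := by
    intro ω
    refine sum_nonneg fun j _ => mul_nonneg (abs_nonneg _) (prod_nonneg fun l _ => ?_)
    linarith [(hval₂ l (X l ω)).2]
  have hDle : ∀ ω, D ω ≤ (J : ℝ) := by
    intro ω
    calc D ω ≤ ∑ j ∈ range J, 1 := by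
          refine sum_le_sum fun j _ => ?_
          have h1 : |h₁ j (X j ω) - h₂ j (X j ω)| ≤ 1 := by
            rw [abs_le]
            constructor <;> linarith [(hval₁ j (X j ω)).1, (hval₁ j (X j ω)).2,
              (hval₂ j (X j ω)).1, (hval₂ j (X j ω)).2]
          have h2 : ∏ l ∈ range j, (1 - h₂ l (X l ω)) ≤ 1 :=
            Finset.prod_le_one (fun l _ => by linarith [(hval₂ l (X l ω)).2])
              (fun l _ => by linarith [(hval₂ l (X l ω)).1])
          have h3 : 0 ≤ ∏ l ∈ range j, (1 - h₂ l (X l ω)) :=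
            prod_nonneg fun l _ => by linarith [(hval₂ l (X l ω)).2]
          nlinarith
      _ = (J : ℝ) := by simp
  have hAB : ∀ ω, |A ω - B ω| ≤ CZ := by
    intro ω
    have hAb := S_bounds CZ J (fun j => G j (X j ω)) (fun j => h₁ j (X j ω))
      (fun j => hG j (X j ω)) (fun j => hval₁ j (X j ω)) (hJ₁ (X J ω))
    have hBb := S_bounds CZ J (fun j => G j (X j ω)) (fun j => h₂ j (X j ω))
      (fun j => hG j (X j ω)) (fun j => hval₂ j (X j ω)) (hJ₂ (X J ω))
    simp only [hA, hB]
    rw [abs_le]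
    constructor <;> [linarith [hAb.1, hBb.2]; linarith [hAb.2, hBb.1]]
  have hsq : ∀ ω, |A ω - B ω| ^ 2 ≤ CZ ^ 2 * |D ω| ^ 2 := by
    intro ω
    have h1 : |A ω - B ω| ^ 2 ≤ (CZ * D ω) ^ 2 :=
      pow_le_pow_left₀ (abs_nonneg _) (hpt ω) 2
    calc |A ω - B ω| ^ 2 ≤ (CZ * D ω) ^ 2 := h1
      _ = CZ ^ 2 * |D ω| ^ 2 := by rw [sq_abs]; ring
  have measA : Measurable A := by
    refine Finset.measurable_sum _ fun j _ => ?_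
    exact (((hGmeas j).comp (hX j)).mul ((hmeas₁ j).comp (hX j))).mul
      (Finset.measurable_prod _ fun l _ => measurable_const.sub ((hmeas₁ l).comp (hX l)))
  have measB : Measurable B := by
    refine Finset.measurable_sum _ fun j _ => ?_
    exact (((hGmeas j).comp (hX j)).mul ((hmeas₂ j).comp (hX j))).mul
      (Finset.measurable_prod _ fun l _ => measurable_const.sub ((hmeas₂ l).comp (hX l)))
  have measD : Measurable D := by
    refine Finset.measurable_sum _ fun j _ => ?_
    exact (((hmeas₁ j).comp (hX j)).sub ((hmeas₂ j).comp (hX j))).abs.mul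
      (Finset.measurable_prod _ fun l _ => measurable_const.sub ((hmeas₂ l).comp (hX l)))
  have hfint : Integrable (fun ω => |A ω - B ω| ^ 2) μ := by
    refine Integrable.mono' (integrable_const (CZ ^ 2))
      ((measA.sub measB).abs.pow_const 2).aestronglyMeasurable (ae_of_all μ fun ω => ?_)
    rw [Real.norm_eq_abs, abs_of_nonneg (by positivity)]
    have := hAB ω
    nlinarith [abs_nonneg (A ω - B ω)]
  have hgint : Integrable (fun ω => CZ ^ 2 * |D ω| ^ 2) μ := by
    refine Integrable.mono' (integrable_const (CZ ^ 2 * (J : ℝ) ^ 2))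
      (measurable_const.mul (measD.abs.pow_const 2)).aestronglyMeasurable
      (ae_of_all μ fun ω => ?_)
    rw [Real.norm_eq_abs, abs_of_nonneg (by positivity)]
    have h1 := hDnn ω
    have h2 := hDle ω
    have h3 : |D ω| ^ 2 ≤ (J : ℝ) ^ 2 := by
      rw [abs_of_nonneg h1]; nlinarith
    nlinarith [sq_nonneg CZ]
  have hint : ∫ ω, |A ω - B ω| ^ 2 ∂μ ≤ ∫ ω, CZ ^ 2 * |D ω| ^ 2 ∂μ :=
    integral_mono hfint hgint hsq
  calc Real.sqrt (∫ ω, |A ω - B ω| ^ 2 ∂μ)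
      ≤ Real.sqrt (∫ ω, CZ ^ 2 * |D ω| ^ 2 ∂μ) := Real.sqrt_le_sqrt hint
    _ = Real.sqrt (CZ ^ 2 * ∫ ω, |D ω| ^ 2 ∂μ) := by rw [integral_const_mul]
    _ = Real.sqrt (CZ ^ 2) * Real.sqrt (∫ ω, |D ω| ^ 2 ∂μ) := Real.sqrt_mul (sq_nonneg CZ) _
    _ = CZ * Real.sqrt (∫ ω, |D ω| ^ 2 ∂μ) := by rw [Real.sqrt_sq hCZ]
end

section
/- Let (Ω,F,P) be a probability space with a filtration (F_j)_{j=0}^J, X_j Markov-chain values in ℝ^d adapted, Z_j = G_j(X_j) with G_j ≥ 0 bounded, and define Q_{k−1}(h_{k−1},...,h_J) = E[ Σ_{j=k−1}^J Z_j h_j(X_j) ∏_{l=k−1}^{j−1}(1 − h_l(X_l)) ] for [0,1]-valued measurable functions h_j with h_J ≡ 1. Let h_j^⋆ = 1_{S_j^⋆} be the optimal stopping indicators with continuation values C_{k−1}^⋆ = C_{k−1}(X_{k−1}) = E[Y_{k}^⋆ | X_{k−1}]. Then for any k > 1 and any h_{k−1},...,h_J: 0 ≤ Q_{k−1}(h^⋆_{k−1},...,h^⋆_J)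 − Q_{k−1}(h_{k−1},...,h_J) ≤ Q_k(h^⋆_k,...,h^⋆_J) − Q_k(h_k,...,h_J) + E[(Z_{k−1} − C^⋆_{k−1})(h^⋆_{k−1}(X_{k−1}) − h_{k−1}(X_{k−1}))]. -/
open Finset MeasureTheory

/-- The randomized reward functional
`Q_k(h) = E[ Σ_{j=k}^J G_j(X_j) h_j(X_j) ∏_{l=k}^{j−1}(1 − h_l(X_l)) ]`. -/
noncomputable def rewardQ {Ω : Type*} [MeasurableSpace Ω] (μ : MeasureTheory.Measure Ω)
    (d J : ℕ) (X : ℕ → Ω → (Fin d → ℝ)) (G : ℕ → (Fin d → ℝ) → ℝ)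
    (k : ℕ) (h : ℕ → (Fin d → ℝ) → ℝ) : ℝ :=
  ∫ ω, ∑ j ∈ Icc k J, G j (X j ω) * h j (X j ω) * ∏ l ∈ Ico k j, (1 - h l (X l ω)) ∂μ

section AuxSsum

variable {Ω : Type*}

/-- Partial randomized reward sum starting at `k`. -/
noncomputable def Ssum (J : ℕ) (Z H : ℕ → Ω → ℝ) (k : ℕ) (ω : Ω) : ℝ :=
  ∑ j ∈ Icc k J, Z j ω * H j ω * ∏ l ∈ Ico k j, (1 - H l ω)

lemma Ssum_rec (J : ℕ) (Z H : ℕ → Ω → ℝ) {k : ℕ} (hk : k ≤ J) (ω : Ω) :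
    Ssum J Z H k ω = Z k ω * H k ω + (1 - H k ω) * Ssum J Z H (k + 1) ω := by
  unfold Ssum
  rw [← Finset.Ioc_insert_left hk, Finset.sum_insert (by simp),
    Finset.Ico_self, Finset.prod_empty, mul_one]
  congr 1
  rw [Finset.mul_sum, Finset.Icc_add_one_left_eq_Ioc]
  refine Finset.sum_congr rfl fun j hj => ?_
  have hkj : k < j := (Finset.mem_Ioc.mp hj).1
  rw [← Finset.Ioo_insert_left hkj, Finset.prod_insert (by simp), Finset.Ico_add_one_left_eq_Ioo]
  ring

lemma Ssum_last (J : ℕ) (Z H : ℕ → Ω → ℝ) (ω : Ω) :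
    Ssum J Z H J ω = Z J ω * H J ω := by
  unfold Ssum
  simp

lemma Ssum_nonneg (J : ℕ) (Z H : ℕ → Ω → ℝ) (k : ℕ) (ω : Ω)
    (hZ : ∀ j, 0 ≤ Z j ω) (hH : ∀ j, 0 ≤ H j ω ∧ H j ω ≤ 1) :
    0 ≤ Ssum J Z H k ω :=
  Finset.sum_nonneg fun j _ => mul_nonneg (mul_nonneg (hZ j) (hH j).1)
    (Finset.prod_nonneg fun l _ => by linarith [(hH l).2])

lemma Ssum_le (J : ℕ) (Z H : ℕ → Ω → ℝ) (k : ℕ) (ω : Ω) {CZ : ℝ} (hCZ : 0 ≤ CZ)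
    (hZ : ∀ j, 0 ≤ Z j ω ∧ Z j ω ≤ CZ) (hH : ∀ j, 0 ≤ H j ω ∧ H j ω ≤ 1) :
    Ssum J Z H k ω ≤ ((J : ℝ) + 1) * CZ := by
  have h1 : Ssum J Z H k ω ≤ ∑ _j ∈ Icc k J, CZ := by
    refine Finset.sum_le_sum fun j _ => ?_
    have hp0 : (0 : ℝ) ≤ ∏ l ∈ Ico k j, (1 - H l ω) :=
      Finset.prod_nonneg fun l _ => by linarith [(hH l).2]
    have hp1 : ∏ l ∈ Ico k j, (1 - H l ω) ≤ 1 :=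
      Finset.prod_le_one (fun l _ => by linarith [(hH l).2]) (fun l _ => by linarith [(hH l).1])
    have t1 : Z j ω * H j ω * ∏ l ∈ Ico k j, (1 - H l ω) ≤ Z j ω * H j ω :=
      mul_le_of_le_one_right (mul_nonneg (hZ j).1 (hH j).1) hp1
    have t2 : Z j ω * H j ω ≤ Z j ω := mul_le_of_le_one_right (hZ j).1 (hH j).2
    linarith [(hZ j).2]
  refine h1.trans ?_
  rw [Finset.sum_const, nsmul_eq_mul]
  refine mul_le_mul_of_nonneg_right ?_ hCZ
  rw [Nat.card_Icc]
  have : ((J + 1 - k : ℕ) : ℝ) ≤ ((J + 1 : ℕ) : ℝ) := Nat.cast_le.mpr (Nat.sub_le _ _)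
  push_cast at this ⊢
  linarith

lemma Ssum_abs_le (J : ℕ) (Z H : ℕ → Ω → ℝ) (k : ℕ) (ω : Ω) {CZ : ℝ} (hCZ : 0 ≤ CZ)
    (hZ : ∀ j, 0 ≤ Z j ω ∧ Z j ω ≤ CZ) (hH : ∀ j, 0 ≤ H j ω ∧ H j ω ≤ 1) :
    |Ssum J Z H k ω| ≤ ((J : ℝ) + 1) * CZ := by
  rw [abs_of_nonneg (Ssum_nonneg J Z H k ω (fun j => (hZ j).1) hH)]
  exact Ssum_le J Z H k ω hCZ hZ hH

lemma measurable_Ssum [MeasurableSpace Ω] (J : ℕ) (Z H : ℕ → Ω → ℝ)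
    (hZ : ∀ j, Measurable (Z j)) (hH : ∀ j, Measurable (H j)) (k : ℕ) :
    Measurable (Ssum J Z H k) := by
  unfold Ssum
  exact Finset.measurable_sum _ fun j _ =>
    ((hZ j).mul (hH j)).mul (Finset.measurable_prod _ fun l _ => measurable_const.sub (hH l))

lemma integrable_Ssum [MeasurableSpace Ω] {μ : Measure Ω} [IsFiniteMeasure μ]
    (J : ℕ) (Z H : ℕ → Ω → ℝ) (k : ℕ)
    (hZm : ∀ j, Measurable (Z j)) (hHm : ∀ j, Measurable (H j)) {CZ : ℝ} (hCZ : 0 ≤ CZ)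
    (hZ : ∀ j ω, 0 ≤ Z j ω ∧ Z j ω ≤ CZ) (hH : ∀ j ω, 0 ≤ H j ω ∧ H j ω ≤ 1) :
    Integrable (Ssum J Z H k) μ :=
  (integrable_const (((J : ℝ) + 1) * CZ)).mono'
    (measurable_Ssum J Z H hZm hHm k).aestronglyMeasurable
    (Filter.Eventually.of_forall fun ω => by
      rw [Real.norm_eq_abs]
      exact Ssum_abs_le J Z H k ω hCZ (fun j => hZ j ω) (fun j => hH j ω))

end AuxSsum

/-- Proposition (one-step error, `errstep`): in the Markovian optimal stopping setting with
Snell envelope `Y⋆`, continuation value functions `C_j` (so `C_j(X_j) = E[Y⋆_{j+1}|F_j]`)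
and optimal exercise indicators `h⋆_j = 1_{G_j ≥ C_j}`, `h⋆_J ≡ 1`, for any `k > 1` and
any `[0,1]`-valued `h_{k−1},...,h_J` with `h_J ≡ 1`:
`0 ≤ Q_{k−1}(h⋆) − Q_{k−1}(h) ≤ Q_k(h⋆) − Q_k(h)
  + E[(Z_{k−1} − C⋆_{k−1})(h⋆_{k−1}(X_{k−1}) − h_{k−1}(X_{k−1}))]`. -/
theorem stmt_5 {Ω : Type*} {m : MeasurableSpace Ω} (μ : Measure Ω) [IsProbabilityMeasure μ]
    (F : Filtration ℕ m) (d J : ℕ) (X : ℕ → Ω → (Fin d → ℝ))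
    (hXad : ∀ j, Measurable[F j] (X j))
    (CZ : ℝ) (G : ℕ → (Fin d → ℝ) → ℝ) (hGmeas : ∀ j, Measurable (G j))
    (hG : ∀ j x, 0 ≤ G j x ∧ G j x ≤ CZ)
    (Y : ℕ → Ω → ℝ)
    (hYJ : Y J = fun ω => G J (X J ω))
    (hYrec : ∀ j < J, Y j =ᵐ[μ] fun ω => max (G j (X j ω)) ((μ[Y (j + 1) | F j]) ω))
    (Cfun : ℕ → (Fin d → ℝ) → ℝ)
    (hCfun : ∀ j < J, (fun ω => Cfun j (X j ω)) =ᵐ[μ] μ[Y (j + 1) | F j])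
    (hstar : ℕ → (Fin d → ℝ) → ℝ)
    (hstar_def : ∀ j < J, ∀ x, hstar j x = if Cfun j x ≤ G j x then 1 else 0)
    (hstarJ : ∀ x, hstar J x = 1)
    (k : ℕ) (hk : 1 < k) (hkJ : k ≤ J)
    (h : ℕ → (Fin d → ℝ) → ℝ) (hmeas : ∀ j, Measurable (h j))
    (hval : ∀ j x, h j x ∈ Set.Icc (0 : ℝ) 1) (hhJ : ∀ x, h J x = 1) :
    0 ≤ rewardQ μ d J X G (k - 1) hstar - rewardQ μ d J X G (k - 1) h ∧
    rewardQ μ d J X G (k - 1) hstar - rewardQ μ d J X G (k - 1) h ≤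
      rewardQ μ d J X G k hstar - rewardQ μ d J X G k h +
        ∫ ω, (G (k - 1) (X (k - 1) ω) - Cfun (k - 1) (X (k - 1) ω)) *
          (hstar (k - 1) (X (k - 1) ω) - h (k - 1) (X (k - 1) ω)) ∂μ := by
  obtain ⟨a, rfl⟩ : ∃ a, k = a + 1 := ⟨k - 1, by omega⟩
  have haJ : a < J := by omega
  set Z : ℕ → Ω → ℝ := fun j ω => G j (X j ω) with hZ_def
  set HH : ℕ → Ω → ℝ := fun j ω => h j (X j ω) with hHH_def
  set US : ℕ → Ω → ℝ :=
    fun j ω => if j = J then 1 else if (μ[Y (j + 1)|F j]) ω ≤ Z j ω then 1 else 0 with hUS_def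
  have hCZ : 0 ≤ CZ := le_trans (hG 0 (fun _ => 0)).1 (hG 0 (fun _ => 0)).2
  have hZval : ∀ j ω, 0 ≤ Z j ω ∧ Z j ω ≤ CZ := fun j ω => hG j (X j ω)
  have hHHval : ∀ j ω, 0 ≤ HH j ω ∧ HH j ω ≤ 1 := fun j ω =>
    ⟨(hval j (X j ω)).1, (hval j (X j ω)).2⟩
  have hUSval : ∀ j ω, 0 ≤ US j ω ∧ US j ω ≤ 1 := fun j ω => by
    simp only [hUS_def]; split_ifs <;> norm_num
  have hZmF : ∀ j, Measurable[F j] (Z j) := fun j => (hGmeas j).comp (hXad j)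
  have hZm : ∀ j, Measurable (Z j) := fun j => (hZmF j).mono (F.le j) le_rfl
  have hHHmF : ∀ j, Measurable[F j] (HH j) := fun j => (hmeas j).comp (hXad j)
  have hHHm : ∀ j, Measurable (HH j) := fun j => (hHHmF j).mono (F.le j) le_rfl
  have hUSmF : ∀ j, Measurable[F j] (US j) := fun j => by
    simp only [hUS_def]
    by_cases hj : j = J
    · simp only [hj, if_pos rfl]; exact measurable_const
    · simp only [hj, if_false]
      exact Measurable.ite (measurableSet_le stronglyMeasurable_condExp.measurable (hZmF j))
        measurable_const measurable_const
  have hUSm : ∀ j, Measurable (US j) := fun j => (hUSmF j).mono (F.le j) le_rfl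
  have intS : ∀ kk, Integrable (Ssum J Z HH kk) μ := fun kk =>
    integrable_Ssum J Z HH kk hZm hHHm hCZ hZval hHHval
  have intT : ∀ kk, Integrable (Ssum J Z US kk) μ := fun kk =>
    integrable_Ssum J Z US kk hZm hUSm hCZ hZval hUSval
  have norm_le_one : ∀ (f : ℕ → Ω → ℝ), (∀ j ω, 0 ≤ f j ω ∧ f j ω ≤ 1) →
      ∀ j ω, ‖f j ω‖ ≤ 1 := fun f hf j ω => by
    rw [Real.norm_eq_abs, abs_of_nonneg (hf j ω).1]; exact (hf j ω).2
  -- the key backward induction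
  have hbase : (μ[Ssum J Z US J|F J] =ᵐ[μ] Y J) ∧ Integrable (Y J) μ ∧
      (μ[Ssum J Z HH J|F J] ≤ᵐ[μ] Y J) := by
    have hT : Ssum J Z US J = Y J := funext fun ω => by
      rw [Ssum_last, hYJ]; simp [hUS_def, hZ_def]
    have hS : Ssum J Z HH J = Y J := funext fun ω => by
      rw [Ssum_last, hYJ]; simp [hHH_def, hZ_def, hhJ]
    have hYm : Measurable[F J] (Y J) := by rw [hYJ]; exact hZmF J
    have hYint : Integrable (Y J) μ := hT ▸ intT J
    refine ⟨?_, hYint, ?_⟩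
    · rw [hT, condExp_of_stronglyMeasurable (F.le J) hYm.stronglyMeasurable hYint]
    · rw [hS, condExp_of_stronglyMeasurable (F.le J) hYm.stronglyMeasurable hYint]
  have key : ∀ n kk, kk ≤ J → J - kk ≤ n →
      (μ[Ssum J Z US kk|F kk] =ᵐ[μ] Y kk) ∧ Integrable (Y kk) μ ∧
        (μ[Ssum J Z HH kk|F kk] ≤ᵐ[μ] Y kk) := by
    intro n
    induction n with
    | zero =>
      intro kk hkk hle
      have : kk = J := by omega
      subst this
      exact hbase
    | succ n ih =>
      intro kk hkk hle
      rcases eq_or_lt_of_le hkk with rfl | hlt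
      · exact hbase
      obtain ⟨ihT, ihY, ihS⟩ := ih (kk + 1) (by omega) (by omega)
      have hle1 : F kk ≤ F (kk + 1) := F.mono (Nat.le_succ kk)
      have towT : μ[Ssum J Z US (kk + 1)|F kk] =ᵐ[μ] μ[Y (kk + 1)|F kk] :=
        (condExp_condExp_of_le hle1 (F.le (kk + 1))).symm.trans (condExp_congr_ae ihT)
      have towS : μ[Ssum J Z HH (kk + 1)|F kk] ≤ᵐ[μ] μ[Y (kk + 1)|F kk] :=
        ((condExp_condExp_of_le hle1 (F.le (kk + 1))).symm.le).trans
          (condExp_mono integrable_condExp ihY ihS)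
      have split : ∀ (Hf : ℕ → Ω → ℝ), (∀ j, Measurable[F j] (Hf j)) →
          (∀ j ω, 0 ≤ Hf j ω ∧ Hf j ω ≤ 1) → Integrable (Ssum J Z Hf (kk + 1)) μ →
          μ[Ssum J Z Hf kk|F kk] =ᵐ[μ]
            fun ω => Z kk ω * Hf kk ω + (1 - Hf kk ω) * (μ[Ssum J Z Hf (kk + 1)|F kk]) ω := by
        intro Hf hHfm hHfval hint
        have hA : Integrable (fun ω => Z kk ω * Hf kk ω) μ :=
          (integrable_const CZ).mono'
            ((hZm kk).mul ((hHfm kk).mono (F.le kk) le_rfl)).aestronglyMeasurable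
            (Filter.Eventually.of_forall fun ω => by
              rw [Real.norm_eq_abs,
                abs_of_nonneg (mul_nonneg (hZval kk ω).1 (hHfval kk ω).1)]
              exact le_trans
                (mul_le_of_le_one_right (hZval kk ω).1 (hHfval kk ω).2) (hZval kk ω).2)
        have hB : Integrable (fun ω => (1 - Hf kk ω) * Ssum J Z Hf (kk + 1) ω) μ :=
          hint.bdd_mul
            ((measurable_const.sub ((hHfm kk).mono (F.le kk) le_rfl)).aestronglyMeasurable)
            (c := 1) (Filter.Eventually.of_forall fun ω => by
              rw [Real.norm_eq_abs, abs_le]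
              constructor <;> linarith [(hHfval kk ω).1, (hHfval kk ω).2])
        have hrec : Ssum J Z Hf kk =
            (fun ω => Z kk ω * Hf kk ω) + fun ω => (1 - Hf kk ω) * Ssum J Z Hf (kk + 1) ω :=
          funext fun ω => Ssum_rec J Z Hf (le_of_lt hlt) ω
        rw [hrec]
        have e1 := condExp_add (μ := μ) (m := F kk) hA hB
        have e2 : μ[(fun ω => Z kk ω * Hf kk ω)|F kk] = fun ω => Z kk ω * Hf kk ω :=
          condExp_of_stronglyMeasurable (F.le kk)
            (((hZmF kk).mul (hHfm kk)).stronglyMeasurable) hA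
        have e3 : μ[(fun ω => (1 - Hf kk ω) * Ssum J Z Hf (kk + 1) ω)|F kk] =ᵐ[μ]
            (fun ω => 1 - Hf kk ω) * μ[Ssum J Z Hf (kk + 1)|F kk] :=
          condExp_mul_of_stronglyMeasurable_left
            ((measurable_const.sub (hHfm kk)).stronglyMeasurable) hB hint
        filter_upwards [e1, e3] with ω h1 h3
        rw [h1, Pi.add_apply, e2, h3, Pi.mul_apply]
      have hYkk := hYrec kk hlt
      have P2 : μ[Ssum J Z US kk|F kk] =ᵐ[μ] Y kk := by
        have e := split US hUSmF hUSval (intT (kk + 1))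
        filter_upwards [e, towT, hYkk] with ω h1 h2 h3
        rw [h1, h2, h3]
        simp only [hUS_def, hZ_def, if_neg (Nat.ne_of_lt hlt)]
        split_ifs with hle2
        · rw [max_eq_left hle2]; ring
        · rw [max_eq_right (le_of_lt (lt_of_not_ge hle2))]; ring
      have YintK : Integrable (Y kk) μ := integrable_condExp.congr P2
      have P1 : μ[Ssum J Z HH kk|F kk] ≤ᵐ[μ] Y kk := by
        have e := split HH hHHmF hHHval (intS (kk + 1))
        filter_upwards [e, towS, hYkk] with ω h1 h2 h3
        rw [h1, h3]
        have hm1 : G kk (X kk ω) ≤ max (G kk (X kk ω)) ((μ[Y (kk + 1)|F kk]) ω) :=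
          le_max_left _ _
        have hm2 : (μ[Y (kk + 1)|F kk]) ω ≤ max (G kk (X kk ω)) ((μ[Y (kk + 1)|F kk]) ω) :=
          le_max_right _ _
        have hH0 := (hHHval kk ω).1
        have hH1 := (hHHval kk ω).2
        simp only [hZ_def, hHH_def] at *
        nlinarith [mul_nonneg hH0 (sub_nonneg.mpr hm1),
          mul_nonneg (sub_nonneg.mpr hH1) (sub_nonneg.mpr (h2.trans hm2)),
          mul_nonneg (sub_nonneg.mpr hH1) (sub_nonneg.mpr h2)]
      exact ⟨P2, YintK, P1⟩
  obtain ⟨PTa, YintA, PSa⟩ := key J a (by omega) (by omega)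
  obtain ⟨PTk, YintK, PSk⟩ := key J (a + 1) (by omega) (by omega)
  -- identification of hstar with US almost everywhere
  have hVUSj : ∀ j, j ≤ J → (fun ω => hstar j (X j ω)) =ᵐ[μ] US j := by
    intro j hjJ
    rcases eq_or_lt_of_le hjJ with rfl | hlt
    · refine Filter.Eventually.of_forall fun ω => ?_
      show hstar j (X j ω) = US j ω
      rw [hstarJ]; simp [hUS_def]
    · filter_upwards [hCfun j hlt] with ω hω
      show hstar j (X j ω) = US j ω
      rw [hstar_def j hlt]
      simp only [hUS_def, hZ_def, if_neg (Nat.ne_of_lt hlt)]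
      rw [hω]
  have hVUS : ∀ᵐ ω ∂μ, ∀ j, j ≤ J → hstar j (X j ω) = US j ω := by
    rw [MeasureTheory.ae_all_iff]
    intro j
    by_cases hj : j ≤ J
    · exact (hVUSj j hj).mono fun ω e _ => e
    · exact Filter.Eventually.of_forall fun ω hle => absurd hle hj
  have hQS : ∀ kk, rewardQ μ d J X G kk h = ∫ ω, Ssum J Z HH kk ω ∂μ := fun kk => by
    simp only [rewardQ, Ssum, hZ_def, hHH_def]
  have hQT : ∀ kk, rewardQ μ d J X G kk hstar = ∫ ω, Ssum J Z US kk ω ∂μ := fun kk => by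
    have h1 : rewardQ μ d J X G kk hstar =
        ∫ ω, Ssum J Z (fun j ω => hstar j (X j ω)) kk ω ∂μ := by
      simp only [rewardQ, Ssum, hZ_def]
    rw [h1]
    refine integral_congr_ae ?_
    filter_upwards [hVUS] with ω hω
    unfold Ssum
    beta_reduce
    refine Finset.sum_congr rfl fun j hj => ?_
    have hjJ : j ≤ J := (Finset.mem_Icc.mp hj).2
    rw [hω j hjJ]
    congr 1
    refine Finset.prod_congr rfl fun l hl => ?_
    have hlJ : l ≤ J := by
      have := (Finset.mem_Ico.mp hl).2; omega
    rw [hω l hlJ]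
  -- Part 1
  have hTa : ∫ ω, Ssum J Z US a ω ∂μ = ∫ ω, Y a ω ∂μ := by
    rw [← integral_condExp (F.le a) (f := Ssum J Z US a)]
    exact integral_congr_ae PTa
  have hSa : ∫ ω, Ssum J Z HH a ω ∂μ ≤ ∫ ω, Y a ω ∂μ := by
    rw [← integral_condExp (F.le a) (f := Ssum J Z HH a)]
    exact integral_mono_ae integrable_condExp YintA PSa
  have hsub : a + 1 - 1 = a := by omega
  constructor
  · rw [hsub, hQT a, hQS a]
    linarith
  -- Part 2
  rw [hsub, hQT a, hQS a, hQT (a + 1), hQS (a + 1)]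
  -- integrability of the various products
  have intbdd : ∀ (g f : Ω → ℝ), Integrable g μ → Measurable f → (∀ ω, ‖f ω‖ ≤ 1) →
      Integrable (fun ω => f ω * g ω) μ := fun g f hg hf hb =>
    hg.bdd_mul hf.aestronglyMeasurable (Filter.Eventually.of_forall hb)
  have hUSb : ∀ ω, ‖US a ω‖ ≤ 1 := norm_le_one US hUSval a
  have hHHb : ∀ ω, ‖HH a ω‖ ≤ 1 := norm_le_one HH hHHval a
  have intZa : Integrable (Z a) μ :=
    (integrable_const CZ).mono' (hZm a).aestronglyMeasurable
      (Filter.Eventually.of_forall fun ω => by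
        rw [Real.norm_eq_abs, abs_of_nonneg (hZval a ω).1]; exact (hZval a ω).2)
  have intZU : Integrable (fun ω => Z a ω * US a ω) μ :=
    (intbdd (Z a) (US a) intZa (hUSm a) hUSb).congr
      (Filter.Eventually.of_forall fun ω => mul_comm _ _)
  have intZH : Integrable (fun ω => Z a ω * HH a ω) μ :=
    (intbdd (Z a) (HH a) intZa (hHHm a) hHHb).congr
      (Filter.Eventually.of_forall fun ω => mul_comm _ _)
  have intUT : Integrable (fun ω => US a ω * Ssum J Z US (a + 1) ω) μ :=
    intbdd _ _ (intT (a + 1)) (hUSm a) hUSb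
  have intHS : Integrable (fun ω => HH a ω * Ssum J Z HH (a + 1) ω) μ :=
    intbdd _ _ (intS (a + 1)) (hHHm a) hHHb
  have intUv : Integrable (fun ω => US a ω * (μ[Y (a + 1)|F a]) ω) μ :=
    intbdd _ _ integrable_condExp (hUSm a) hUSb
  have intHv : Integrable (fun ω => HH a ω * (μ[Y (a + 1)|F a]) ω) μ :=
    intbdd _ _ integrable_condExp (hHHm a) hHHb
  have hle1 : F a ≤ F (a + 1) := F.mono (Nat.le_succ a)
  have towTa : μ[Ssum J Z US (a + 1)|F a] =ᵐ[μ] μ[Y (a + 1)|F a] :=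
    (condExp_condExp_of_le hle1 (F.le (a + 1))).symm.trans (condExp_congr_ae PTk)
  have towSa : μ[Ssum J Z HH (a + 1)|F a] ≤ᵐ[μ] μ[Y (a + 1)|F a] :=
    ((condExp_condExp_of_le hle1 (F.le (a + 1))).symm.le).trans
      (condExp_mono integrable_condExp YintK PSk)
  have expandT : ∫ ω, Ssum J Z US a ω ∂μ = (∫ ω, Z a ω * US a ω ∂μ) +
      ((∫ ω, Ssum J Z US (a + 1) ω ∂μ) - ∫ ω, US a ω * Ssum J Z US (a + 1) ω ∂μ) := by
    have hpt : ∀ ω, Ssum J Z US a ω = Z a ω * US a ω +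
        (Ssum J Z US (a + 1) ω - US a ω * Ssum J Z US (a + 1) ω) := fun ω => by
      rw [Ssum_rec J Z US (by omega : a ≤ J) ω]; ring
    calc ∫ ω, Ssum J Z US a ω ∂μ
        = ∫ ω, (Z a ω * US a ω +
            (Ssum J Z US (a + 1) ω - US a ω * Ssum J Z US (a + 1) ω)) ∂μ :=
          integral_congr_ae (Filter.Eventually.of_forall hpt)
      _ = _ := by
          have hgint : Integrable
              (fun ω => Ssum J Z US (a + 1) ω - US a ω * Ssum J Z US (a + 1) ω) μ :=
            (intT (a + 1)).sub intUT
          rw [integral_add intZU hgint, integral_sub (intT (a + 1)) intUT]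
  have expandS : ∫ ω, Ssum J Z HH a ω ∂μ = (∫ ω, Z a ω * HH a ω ∂μ) +
      ((∫ ω, Ssum J Z HH (a + 1) ω ∂μ) - ∫ ω, HH a ω * Ssum J Z HH (a + 1) ω ∂μ) := by
    have hpt : ∀ ω, Ssum J Z HH a ω = Z a ω * HH a ω +
        (Ssum J Z HH (a + 1) ω - HH a ω * Ssum J Z HH (a + 1) ω) := fun ω => by
      rw [Ssum_rec J Z HH (by omega : a ≤ J) ω]; ring
    calc ∫ ω, Ssum J Z HH a ω ∂μ
        = ∫ ω, (Z a ω * HH a ω +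
            (Ssum J Z HH (a + 1) ω - HH a ω * Ssum J Z HH (a + 1) ω)) ∂μ :=
          integral_congr_ae (Filter.Eventually.of_forall hpt)
      _ = _ := by
          have hgint : Integrable
              (fun ω => Ssum J Z HH (a + 1) ω - HH a ω * Ssum J Z HH (a + 1) ω) μ :=
            (intS (a + 1)).sub intHS
          rw [integral_add intZH hgint, integral_sub (intS (a + 1)) intHS]
  have eUT : ∫ ω, US a ω * Ssum J Z US (a + 1) ω ∂μ =
      ∫ ω, US a ω * (μ[Y (a + 1)|F a]) ω ∂μ := by
    rw [← integral_condExp (F.le a) (f := fun ω => US a ω * Ssum J Z US (a + 1) ω)]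
    refine integral_congr_ae ?_
    have epull : μ[(fun ω => US a ω * Ssum J Z US (a + 1) ω)|F a] =ᵐ[μ]
        (fun ω => US a ω) * μ[Ssum J Z US (a + 1)|F a] :=
      condExp_mul_of_stronglyMeasurable_left (μ := μ)
        ((hUSmF a).stronglyMeasurable) intUT (intT (a + 1))
    filter_upwards [epull, towTa] with ω h1 h2
    rw [h1]
    simp only [Pi.mul_apply]
    rw [h2]
  have eHS : ∫ ω, HH a ω * Ssum J Z HH (a + 1) ω ∂μ ≤
      ∫ ω, HH a ω * (μ[Y (a + 1)|F a]) ω ∂μ := by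
    rw [← integral_condExp (F.le a) (f := fun ω => HH a ω * Ssum J Z HH (a + 1) ω)]
    refine integral_mono_ae integrable_condExp intHv ?_
    have epull : μ[(fun ω => HH a ω * Ssum J Z HH (a + 1) ω)|F a] =ᵐ[μ]
        (fun ω => HH a ω) * μ[Ssum J Z HH (a + 1)|F a] :=
      condExp_mul_of_stronglyMeasurable_left (μ := μ)
        ((hHHmF a).stronglyMeasurable) intHS (intS (a + 1))
    filter_upwards [epull, towSa] with ω h1 h2
    rw [h1]
    simp only [Pi.mul_apply]
    exact mul_le_mul_of_nonneg_left h2 (hHHval a ω).1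
  have hE : ∫ ω, (G a (X a ω) - Cfun a (X a ω)) *
      (hstar a (X a ω) - h a (X a ω)) ∂μ =
      ∫ ω, (Z a ω - (μ[Y (a + 1)|F a]) ω) * (US a ω - HH a ω) ∂μ := by
    refine integral_congr_ae ?_
    filter_upwards [hCfun a haJ, hVUS] with ω h1 h2
    simp only [hZ_def, hHH_def]
    rw [h1, h2 a (by omega)]
  have hEexp : ∫ ω, (Z a ω - (μ[Y (a + 1)|F a]) ω) * (US a ω - HH a ω) ∂μ =
      (∫ ω, Z a ω * US a ω ∂μ) - (∫ ω, Z a ω * HH a ω ∂μ) -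
        (∫ ω, US a ω * (μ[Y (a + 1)|F a]) ω ∂μ) +
        ∫ ω, HH a ω * (μ[Y (a + 1)|F a]) ω ∂μ := by
    have hpt : ∀ ω, (Z a ω - (μ[Y (a + 1)|F a]) ω) * (US a ω - HH a ω) =
        Z a ω * US a ω - Z a ω * HH a ω - US a ω * (μ[Y (a + 1)|F a]) ω +
          HH a ω * (μ[Y (a + 1)|F a]) ω := fun ω => by ring
    calc ∫ ω, (Z a ω - (μ[Y (a + 1)|F a]) ω) * (US a ω - HH a ω) ∂μ
        = ∫ ω, (Z a ω * US a ω - Z a ω * HH a ω - US a ω * (μ[Y (a + 1)|F a]) ω +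
            HH a ω * (μ[Y (a + 1)|F a]) ω) ∂μ :=
          integral_congr_ae (Filter.Eventually.of_forall hpt)
      _ = _ := by
          have i1 : Integrable (fun ω => Z a ω * US a ω - Z a ω * HH a ω) μ := intZU.sub intZH
          have i2 : Integrable (fun ω =>
              Z a ω * US a ω - Z a ω * HH a ω - US a ω * (μ[Y (a + 1)|F a]) ω) μ :=
            i1.sub intUv
          rw [integral_add i2 intHv, integral_sub i1 intUv, integral_sub intZU intZH]
  rw [expandT, expandS, hE, hEexp]
  linarith [eUT, eHS]
end

section
/- Backward construction preserves conditional exercise probabilities: suppose τ_k is a randomized stopping time with values in {k,...,J} and conditional probabilities p_{k,j} = E[1_{{τ_k=j}}|F_j]. Let U ~ Uniform[0,1] be independent of F ∨ σ(τ_k), h_{k−1} : ℝ^d → [0,1] measurable, X_{k−1} F_{k−1}-measurable, and define τ_{k−1} = k−1 if U < h_{k−1}(X_{k−1}) and τ_{k−1} = τ_k otherwise. Then E[1_{{τ_{k−1}=j}} | F_j] = (1 − h_{k−1}(X_{k−1})) p_{k,j} for all j ≥ k, and E[1_{{τ_{k−1}=k−1}} | F_{k−1}] = h_{k−1}(X_{k−1}).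 -/
open MeasureTheory ProbabilityTheory

lemma vol_aux (t : ℝ) :
    (volume (Set.Iio t ∩ Set.Icc (0:ℝ) 1)).toReal = max (min t 1) 0 := by
  rcases le_or_gt t 0 with h0 | h0
  · have : Set.Iio t ∩ Set.Icc (0:ℝ) 1 = ∅ := by
      ext u; simp only [Set.mem_inter_iff, Set.mem_Iio, Set.mem_Icc, Set.mem_empty_iff_false,
        iff_false, not_and, and_imp]
      intro hu h1 _; linarith
    rw [this]
    simp [min_eq_left (h0.trans zero_le_one), max_eq_right h0]
  · rcases le_or_gt t 1 with h1 | h1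
    · have : Set.Iio t ∩ Set.Icc (0:ℝ) 1 = Set.Ico 0 t := by
        ext u; simp only [Set.mem_inter_iff, Set.mem_Iio, Set.mem_Icc, Set.mem_Ico]
        constructor
        · rintro ⟨hu, h2, _⟩; exact ⟨h2, hu⟩
        · rintro ⟨h2, hu⟩; exact ⟨hu, h2, le_trans hu.le h1⟩
      rw [this, Real.volume_Ico, ENNReal.toReal_ofReal (by linarith)]
      rw [min_eq_left h1, max_eq_left h0.le, sub_zero]
    · have : Set.Iio t ∩ Set.Icc (0:ℝ) 1 = Set.Icc 0 1 := by
        ext u; simp only [Set.mem_inter_iff, Set.mem_Iio, Set.mem_Icc]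
        exact ⟨fun hp => hp.2, fun hp => ⟨lt_of_le_of_lt hp.2 h1, hp⟩⟩
      rw [this, Real.volume_Icc, ENNReal.toReal_ofReal (by norm_num)]
      rw [min_eq_right h1.le, max_eq_left zero_le_one]
      norm_num

lemma freeze_aux {Ω : Type*} {m : MeasurableSpace Ω} (μ : Measure Ω)
    [IsProbabilityMeasure μ] (U V φ : Ω → ℝ)
    (hU : Measurable[m] U) (hV : Measurable[m] V) (hφ : Measurable[m] φ)
    (hUuni : μ.map U = volume.restrict (Set.Icc 0 1))
    (hindep : IndepFun U (fun ω => (V ω, φ ω)) μ)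
    (hV01 : ∀ ω, V ω ∈ Set.Icc (0:ℝ) 1) (hφ01 : ∀ ω, φ ω ∈ Set.Icc (0:ℝ) 1) :
    ∫ ω, φ ω * Set.indicator {ω' | U ω' < V ω'} (fun _ => (1:ℝ)) ω ∂μ
      = ∫ ω, φ ω * V ω ∂μ := by
  set g : Ω → ℝ × ℝ := fun ω => (V ω, φ ω) with hgdef
  have hgm : Measurable[m] g := hV.prodMk hφ
  have hmap : μ.map (fun ω => (U ω, g ω)) = (μ.map U).prod (μ.map g) :=
    (indepFun_iff_map_prod_eq_prod_map_map hU.aemeasurable hgm.aemeasurable).mp hindep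
  set Fn : ℝ × (ℝ × ℝ) → ℝ := fun q => q.2.2 * (if q.1 < q.2.1 then (1:ℝ) else 0) with hFndef
  have hFnm : Measurable Fn := by
    apply (measurable_snd.snd).mul
    exact Measurable.ite (measurableSet_lt measurable_fst measurable_snd.fst)
      measurable_const measurable_const
  have hUg : Measurable[m] (fun ω => (U ω, g ω)) := hU.prodMk hgm
  have hcomp : ∀ ω, Fn (U ω, g ω)
      = φ ω * Set.indicator {ω' | U ω' < V ω'} (fun _ => (1:ℝ)) ω := by
    intro ω
    simp only [hFndef, hgdef, Set.indicator_apply, Set.mem_setOf_eq]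
  have hbd : ∀ ω, ‖Fn (U ω, g ω)‖ ≤ 1 := by
    intro ω
    simp only [hFndef, hgdef, Real.norm_eq_abs]
    split_ifs with hlt
    · rw [mul_one, abs_of_nonneg (hφ01 ω).1]; exact (hφ01 ω).2
    · simp
  have hint : Integrable (fun ω => Fn (U ω, g ω)) μ := by
    refine Integrable.mono' (integrable_const (1:ℝ))
      ((hFnm.comp hUg).aestronglyMeasurable) ?_
    exact Filter.Eventually.of_forall fun ω => hbd ω
  have hintF : Integrable Fn ((μ.map U).prod (μ.map g)) := by
    rw [← hmap, integrable_map_measure hFnm.aestronglyMeasurable hUg.aemeasurable]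
    exact hint
  have hinner : ∀ v : ℝ × ℝ, (∫ u, Fn (u, v) ∂(μ.map U)) = v.2 * max (min v.1 1) 0 := by
    intro v
    rw [hUuni]
    have heq : (fun u => Fn (u, v))
        = fun u => v.2 • Set.indicator (Set.Iio v.1) (fun _ => (1:ℝ)) u := by
      funext u
      simp only [hFndef, Set.indicator_apply, Set.mem_Iio, smul_eq_mul]
    rw [heq, integral_smul, integral_indicator_const (1:ℝ) measurableSet_Iio,
      measureReal_restrict_apply measurableSet_Iio, smul_eq_mul, smul_eq_mul, mul_one, measureReal_def, vol_aux]
  calc ∫ ω, φ ω * Set.indicator {ω' | U ω' < V ω'} (fun _ => (1:ℝ)) ω ∂μ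
      = ∫ ω, Fn (U ω, g ω) ∂μ :=
        integral_congr_ae (Filter.Eventually.of_forall fun ω => (hcomp ω).symm)
    _ = ∫ q, Fn q ∂(μ.map (fun ω => (U ω, g ω))) :=
        (integral_map hUg.aemeasurable hFnm.aestronglyMeasurable).symm
    _ = ∫ q, Fn q ∂((μ.map U).prod (μ.map g)) := by rw [hmap]
    _ = ∫ v, ∫ u, Fn (u, v) ∂(μ.map U) ∂(μ.map g) := integral_prod_symm Fn hintF
    _ = ∫ v : ℝ × ℝ, v.2 * max (min v.1 1) 0 ∂(μ.map g) :=
        integral_congr_ae (Filter.Eventually.of_forall fun v => hinner v)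
    _ = ∫ ω, (g ω).2 * max (min (g ω).1 1) 0 ∂μ :=
        integral_map hgm.aemeasurable
          ((measurable_snd.mul ((measurable_fst.min measurable_const).max
            measurable_const)).aestronglyMeasurable)
    _ = ∫ ω, φ ω * V ω ∂μ := by
        refine integral_congr_ae (Filter.Eventually.of_forall fun ω => ?_)
        simp only [hgdef]
        rw [min_eq_left (hV01 ω).2, max_eq_left (hV01 ω).1]

lemma ind01 {Ω : Type*} (s : Set Ω) (ω : Ω) :
    Set.indicator s (fun _ => (1:ℝ)) ω ∈ Set.Icc (0:ℝ) 1 := by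
  by_cases hω : ω ∈ s
  · rw [Set.indicator_of_mem hω]; exact ⟨zero_le_one, le_refl 1⟩
  · rw [Set.indicator_of_notMem hω]; exact ⟨le_refl 0, zero_le_one⟩

/-- Backward construction preserves conditional exercise probabilities: if `τ_k` is a
randomized stopping time with values in `{k,...,J}` and conditional probabilities
`p_{k,j} = E[1_{τ_k=j}|F_j]`, `U ~ Uniform[0,1]` is independent of `F ∨ σ(τ_k)`,
`X_{k−1}` is `F_{k−1}`-measurable, `h_{k−1} : ℝ^d → [0,1]` is measurable, and
`τ_{k−1} = k−1` if `U < h_{k−1}(X_{k−1})`, `τ_{k−1} = τ_k` otherwise, then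
`E[1_{τ_{k−1}=j} | F_j] = (1 − h_{k−1}(X_{k−1})) p_{k,j}` a.s. for `j ≥ k`, and
`E[1_{τ_{k−1}=k−1} | F_{k−1}] = h_{k−1}(X_{k−1})` a.s. -/
theorem stmt_11 {Ω : Type*} {m : MeasurableSpace Ω} (μ : Measure Ω) [IsProbabilityMeasure μ]
    (d J k : ℕ) (hk : 1 ≤ k) (hkJ : k ≤ J)
    (mF : MeasurableSpace Ω) (hmF : mF ≤ m)
    (F : MeasureTheory.Filtration ℕ m) (hFmF : ∀ j, F j ≤ mF)
    (τk : Ω → ℕ) (hτmeas : Measurable[m] τk) (hτrange : ∀ ω, τk ω ∈ Set.Icc k J)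
    (U : Ω → ℝ) (hUmeas : Measurable[m] U)
    (hUuniform : (@Measure.map Ω ℝ m _ U μ) = volume.restrict (Set.Icc (0 : ℝ) 1))
    (hUindep : @Indep Ω (MeasurableSpace.comap U (borel ℝ))
      (mF ⊔ MeasurableSpace.comap τk (⊤ : MeasurableSpace ℕ)) m μ)
    (X : Ω → (Fin d → ℝ)) (hXmeas : Measurable[F (k - 1)] X)
    (h : (Fin d → ℝ) → ℝ) (hmeas : Measurable h) (hval : ∀ x, h x ∈ Set.Icc (0 : ℝ) 1)
    (τ' : Ω → ℕ) (hτ' : ∀ ω, τ' ω = if U ω < h (X ω) then k - 1 else τk ω)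
    (p : ℕ → Ω → ℝ)
    (hp : ∀ j, p j = μ[Set.indicator {ω | τk ω = j} (fun _ => (1 : ℝ)) | F j]) :
    (∀ j, k ≤ j →
      μ[Set.indicator {ω | τ' ω = j} (fun _ => (1 : ℝ)) | F j]
        =ᵐ[μ] fun ω => (1 - h (X ω)) * p j ω) ∧
    μ[Set.indicator {ω | τ' ω = k - 1} (fun _ => (1 : ℝ)) | F (k - 1)]
      =ᵐ[μ] fun ω => h (X ω) := by
  letI : MeasurableSpace Ω := m
  -- basic measurability facts
  have hτtop : MeasurableSpace.comap τk (⊤ : MeasurableSpace ℕ) ≤ m := by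
    rintro t ⟨u, -, rfl⟩
    exact hτmeas MeasurableSpace.measurableSet_top
  have hGle : mF ⊔ MeasurableSpace.comap τk (⊤ : MeasurableSpace ℕ) ≤ m := sup_le hmF hτtop
  have hXm : Measurable[m] X := hXmeas.mono ((hFmF _).trans hmF) le_rfl
  have hhX : Measurable[m] (fun ω => h (X ω)) := hmeas.comp hXm
  have hhXG : Measurable[mF ⊔ MeasurableSpace.comap τk (⊤ : MeasurableSpace ℕ)]
      (fun ω => h (X ω)) := hmeas.comp (hXmeas.mono ((hFmF _).trans le_sup_left) le_rfl)
  have hA : MeasurableSet[m] {ω | U ω < h (X ω)} := measurableSet_lt hUmeas hhX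
  have hint1 : Integrable (fun _ : Ω => (1:ℝ)) μ := integrable_const 1
  have hconstm : Measurable[m] (fun _ : Ω => (1:ℝ)) := measurable_const
  have hsubm : Measurable[m] (fun ω : Ω => 1 - h (X ω)) := hconstm.sub hhX
  have hconstG : Measurable[mF ⊔ MeasurableSpace.comap τk (⊤ : MeasurableSpace ℕ)]
      (fun _ : Ω => (1:ℝ)) := measurable_const
  -- the freezing identity
  have freeze : ∀ φ : Ω → ℝ,
      Measurable[mF ⊔ MeasurableSpace.comap τk (⊤ : MeasurableSpace ℕ)] φ →
      (∀ ω, φ ω ∈ Set.Icc (0:ℝ) 1) →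
      ∫ ω, φ ω * Set.indicator {ω' | U ω' < h (X ω')} (fun _ => (1:ℝ)) ω ∂μ
        = ∫ ω, φ ω * h (X ω) ∂μ := by
    intro φ hφ hφ01
    refine freeze_aux μ U (fun ω => h (X ω)) φ hUmeas hhX (hφ.mono hGle le_rfl)
      hUuniform ?_ (fun ω => hval _) hφ01
    exact indep_of_indep_of_le_right hUindep (Measurable.comap_le (hhXG.prodMk hφ))
  -- integrability of h ∘ X
  have hInthX : Integrable (fun ω => h (X ω)) μ := by
    refine Integrable.mono' hint1 hhX.aestronglyMeasurable ?_
    refine Filter.Eventually.of_forall fun ω => ?_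
    rw [Real.norm_eq_abs, abs_of_nonneg (hval (X ω)).1]
    exact (hval (X ω)).2
  constructor
  · -- part 1
    intro j hj
    have hkj : k - 1 ≤ j := le_trans (Nat.sub_le k 1) hj
    have hFj : F j ≤ m := (hFmF j).trans hmF
    -- set rewriting
    have hset : {ω | τ' ω = j} = {ω | τk ω = j} ∩ {ω | U ω < h (X ω)}ᶜ := by
      ext ω
      have h1 := (hτrange ω).1
      simp only [Set.mem_setOf_eq, Set.mem_inter_iff, Set.mem_compl_iff, hτ' ω]
      split_ifs with hlt
      · constructor
        · intro he; exfalso; omega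
        · rintro ⟨-, hc⟩; exact absurd hlt hc
      · exact ⟨fun he => ⟨he, hlt⟩, fun hc => hc.1⟩
    have hBm : MeasurableSet[m] {ω | τk ω = j} := by
      have heq : {ω | τk ω = j} = τk ⁻¹' {j} := by ext ω; simp
      rw [heq]
      exact hτmeas (measurableSet_singleton j)
    have hBG : MeasurableSet[mF ⊔ MeasurableSpace.comap τk (⊤ : MeasurableSpace ℕ)]
        {ω | τk ω = j} := by
      apply le_sup_right (α := MeasurableSpace Ω)
      exact ⟨{j}, trivial, by ext ω; simp⟩
    have hIntB : Integrable (Set.indicator {ω | τk ω = j} (fun _ => (1:ℝ))) μ :=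
      hint1.indicator hBm
    have hhXFj : Measurable[F j] (fun ω => h (X ω)) :=
      hmeas.comp (hXmeas.mono (F.mono hkj) le_rfl)
    have hconstFj : Measurable[F j] (fun _ : Ω => (1:ℝ)) := measurable_const
    have hpint : Integrable (p j) μ := by rw [hp j]; exact integrable_condExp
    have hpSM : StronglyMeasurable[F j] (p j) := by rw [hp j]; exact stronglyMeasurable_condExp
    rw [hset]
    refine (ae_eq_condExp_of_forall_setIntegral_eq hFj
      (hint1.indicator (hBm.inter hA.compl)) ?_ ?_ ?_).symm
    · -- local integrability of the candidate
      intro s _ _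
      refine Integrable.integrableOn ?_
      refine Integrable.bdd_mul (c := 1) hpint hsubm.aestronglyMeasurable ?_
      refine Filter.Eventually.of_forall fun ω => ?_
      rw [Real.norm_eq_abs, abs_le]
      constructor
      · linarith [(hval (X ω)).2]
      · linarith [(hval (X ω)).1]
    · -- equality of set integrals
      intro s hs _
      have hsm : MeasurableSet[m] s := hFj s hs
      set φ : Ω → ℝ := Set.indicator (s ∩ {ω | τk ω = j}) (fun _ => (1:ℝ)) with hφdef
      have hφG : Measurable[mF ⊔ MeasurableSpace.comap τk (⊤ : MeasurableSpace ℕ)] φ :=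
        hconstG.indicator
          (MeasurableSet.inter (le_sup_left (α := MeasurableSpace Ω) s ((hFmF j) s hs)) hBG)
      have hφm : Measurable[m] φ := hφG.mono hGle le_rfl
      have hIntφ : Integrable φ μ := hint1.indicator (hsm.inter hBm)
      have hIntφh : Integrable (fun ω => φ ω * h (X ω)) μ := by
        refine Integrable.bdd_mul (c := 1) hInthX hφm.aestronglyMeasurable ?_
        refine Filter.Eventually.of_forall fun ω => ?_
        rw [Real.norm_eq_abs, abs_of_nonneg (ind01 _ ω).1]
        exact (ind01 _ ω).2
      have hIntφA : Integrable
          (fun ω => φ ω * Set.indicator {ω' | U ω' < h (X ω')} (fun _ => (1:ℝ)) ω) μ := by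
        refine Integrable.bdd_mul (c := 1) (hint1.indicator hA) hφm.aestronglyMeasurable ?_
        refine Filter.Eventually.of_forall fun ω => ?_
        rw [Real.norm_eq_abs, abs_of_nonneg (ind01 _ ω).1]
        exact (ind01 _ ω).2
      set ψ : Ω → ℝ := fun ω => Set.indicator s (fun _ => (1:ℝ)) ω * (1 - h (X ω)) with hψdef
      have hψSM : StronglyMeasurable[F j] ψ :=
        (hconstFj.stronglyMeasurable.indicator hs).mul
          (hconstFj.stronglyMeasurable.sub hhXFj.stronglyMeasurable)
      have hψm : Measurable[m] ψ := (hconstm.indicator hsm).mul hsubm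
      have hψbd : ∀ ω, |ψ ω| ≤ 1 := by
        intro ω
        rw [hψdef, abs_mul]
        have h1 : |Set.indicator s (fun _ => (1:ℝ)) ω| ≤ 1 := by
          rw [abs_of_nonneg (ind01 _ ω).1]; exact (ind01 _ ω).2
        have h2 : |1 - h (X ω)| ≤ 1 := by
          rw [abs_le]
          constructor
          · linarith [(hval (X ω)).2]
          · linarith [(hval (X ω)).1]
        calc |Set.indicator s (fun _ => (1:ℝ)) ω| * |1 - h (X ω)|
            ≤ 1 * 1 := mul_le_mul h1 h2 (abs_nonneg _) zero_le_one
          _ = 1 := one_mul 1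
      have hIntψB : Integrable
          (ψ * Set.indicator {ω | τk ω = j} (fun _ => (1:ℝ))) μ := by
        refine Integrable.bdd_mul (c := 1) hIntB hψm.aestronglyMeasurable ?_
        exact Filter.Eventually.of_forall fun ω => by rw [Real.norm_eq_abs]; exact hψbd ω
      have hce : μ[ψ * Set.indicator {ω | τk ω = j} (fun _ => (1:ℝ)) | F j]
          =ᵐ[μ] ψ * μ[Set.indicator {ω | τk ω = j} (fun _ => (1:ℝ)) | F j] :=
        condExp_mul_of_stronglyMeasurable_left hψSM hIntψB hIntB
      -- integral identity from pull-out
      have hpull : ∫ ω, ψ ω * p j ω ∂μ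
          = ∫ ω, ψ ω * Set.indicator {ω | τk ω = j} (fun _ => (1:ℝ)) ω ∂μ := by
        have e1 : ∫ ω, (ψ * Set.indicator {ω | τk ω = j} (fun _ => (1:ℝ))) ω ∂μ
            = ∫ ω, (μ[ψ * Set.indicator {ω | τk ω = j} (fun _ => (1:ℝ)) | F j]) ω ∂μ :=
          (integral_condExp hFj).symm
        have e2 : ∫ ω, (μ[ψ * Set.indicator {ω | τk ω = j} (fun _ => (1:ℝ)) | F j]) ω ∂μ
            = ∫ ω, (ψ * μ[Set.indicator {ω | τk ω = j} (fun _ => (1:ℝ)) | F j]) ω ∂μ :=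
          integral_congr_ae hce
        rw [← hp j] at e2
        exact (e1.trans e2).symm
      -- compute both sides
      have lhs1 : ∫ x in s, (1 - h (X x)) * p j x ∂μ = ∫ ω, ψ ω * p j ω ∂μ := by
        rw [← integral_indicator (μ := μ) hsm]
        refine integral_congr_ae (Filter.Eventually.of_forall fun ω => ?_)
        rw [hψdef]
        by_cases h1 : ω ∈ s <;>
          simp [Set.indicator_of_mem, Set.indicator_of_notMem, h1]
      have lhs2 : ∫ ω, ψ ω * Set.indicator {ω | τk ω = j} (fun _ => (1:ℝ)) ω ∂μ
          = ∫ ω, φ ω * (1 - h (X ω)) ∂μ := by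
        refine integral_congr_ae (Filter.Eventually.of_forall fun ω => ?_)
        rw [hψdef, hφdef]
        by_cases h1 : ω ∈ s <;> by_cases h2 : ω ∈ {ω | τk ω = j} <;>
          simp [Set.indicator_of_mem, Set.indicator_of_notMem, Set.mem_inter_iff, h1, h2]
      have lhs3 : ∫ ω, φ ω * (1 - h (X ω)) ∂μ
          = ∫ ω, φ ω ∂μ - ∫ ω, φ ω * h (X ω) ∂μ := by
        rw [← integral_sub hIntφ hIntφh]
        refine integral_congr_ae (Filter.Eventually.of_forall fun ω => ?_)
        ring
      -- RHS chain
      have rhs1 : ∫ x in s, Set.indicator ({ω | τk ω = j} ∩ {ω | U ω < h (X ω)}ᶜ)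
            (fun _ => (1:ℝ)) x ∂μ
          = ∫ ω, φ ω * (1 - Set.indicator {ω' | U ω' < h (X ω')} (fun _ => (1:ℝ)) ω) ∂μ := by
        rw [← integral_indicator (μ := μ) hsm]
        refine integral_congr_ae (Filter.Eventually.of_forall fun ω => ?_)
        rw [hφdef]
        by_cases h1 : ω ∈ s <;> by_cases h2 : ω ∈ {ω | τk ω = j} <;>
          by_cases h3 : ω ∈ {ω' | U ω' < h (X ω')} <;>
          simp [Set.indicator_apply, Set.mem_inter_iff, Set.mem_compl_iff, h1, h2, h3]
      have rhs2 : ∫ ω, φ ω * (1 - Set.indicator {ω' | U ω' < h (X ω')} (fun _ => (1:ℝ)) ω) ∂μ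
          = ∫ ω, φ ω ∂μ
            - ∫ ω, φ ω * Set.indicator {ω' | U ω' < h (X ω')} (fun _ => (1:ℝ)) ω ∂μ := by
        rw [← integral_sub hIntφ hIntφA]
        refine integral_congr_ae (Filter.Eventually.of_forall fun ω => ?_)
        ring
      rw [lhs1, hpull, lhs2, lhs3, rhs1, rhs2, freeze φ hφG (fun ω => ind01 _ ω)]
    · -- a.e. strong measurability of the candidate
      refine StronglyMeasurable.aestronglyMeasurable ?_
      exact (hconstFj.stronglyMeasurable.sub hhXFj.stronglyMeasurable).mul hpSM
  · -- part 2
    have hFk : F (k - 1) ≤ m := (hFmF _).trans hmF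
    have hset : {ω | τ' ω = k - 1} = {ω | U ω < h (X ω)} := by
      ext ω
      have h1 := (hτrange ω).1
      simp only [Set.mem_setOf_eq, hτ' ω]
      split_ifs with hlt
      · simp [hlt]
      · exact ⟨fun he => by omega, fun hc => absurd hc hlt⟩
    rw [hset]
    refine (ae_eq_condExp_of_forall_setIntegral_eq hFk
      (hint1.indicator hA) ?_ ?_ ?_).symm
    · exact fun s _ _ => hInthX.integrableOn
    · intro s hs _
      have hsm : MeasurableSet[m] s := hFk s hs
      set φ : Ω → ℝ := Set.indicator s (fun _ => (1:ℝ)) with hφdef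
      have hφG : Measurable[mF ⊔ MeasurableSpace.comap τk (⊤ : MeasurableSpace ℕ)] φ :=
        hconstG.indicator (le_sup_left (α := MeasurableSpace Ω) s ((hFmF _) s hs))
      have e1 : ∫ x in s, h (X x) ∂μ = ∫ ω, φ ω * h (X ω) ∂μ := by
        rw [← integral_indicator (μ := μ) hsm]
        refine integral_congr_ae (Filter.Eventually.of_forall fun ω => ?_)
        rw [hφdef]
        by_cases h1 : ω ∈ s <;>
          simp [Set.indicator_of_mem, Set.indicator_of_notMem, h1]
      have e2 : ∫ x in s, Set.indicator {ω | U ω < h (X ω)} (fun _ => (1:ℝ)) x ∂μ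
          = ∫ ω, φ ω * Set.indicator {ω' | U ω' < h (X ω')} (fun _ => (1:ℝ)) ω ∂μ := by
        rw [← integral_indicator (μ := μ) hsm]
        refine integral_congr_ae (Filter.Eventually.of_forall fun ω => ?_)
        rw [hφdef]
        by_cases h1 : ω ∈ s <;> by_cases h2 : ω ∈ {ω' | U ω' < h (X ω')} <;>
          simp [Set.indicator_apply, h1, h2]
      rw [e1, e2, freeze φ hφG (fun ω => ind01 _ ω)]
    · exact StronglyMeasurable.aestronglyMeasurable
        (hmeas.comp hXmeas).stronglyMeasurable
end
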